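/- Let M be a matroid of rank d on E, and suppose {i, j} is a circuit of M. If ν and ν' are matroid valuations with support matroid M such that ν(B) = ν'(B) for all B ∈ binom(E,d) with j ∉ B, then ν and ν' are equivalent, i.e. there exists α ∈ ℝ^E with ν(B) = ν'(B) + Σ_{k∈B} α_k for all B ∈ binom(E,d) with ν'(B) < ∞. -/

import Mathlib

open Matroid Set

namespace FrobFlock

variable {E : Type*}

/-- The matroid `N` on `E` is algebraic over the field `K`: there is a field extension
`L` of `K` and a map `φ : E → L` such that `I ⊆ E` is independent in `N` if and only if
the family `(φ(i))_{i∈I}` is algebraically independent over `K`. -/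
def AlgebraicOver (K : Type*) [Field K] (N : Matroid E) : Prop :=
  ∃ (L : Type*) (_ : Field L) (_ : Algebra K L) (φ : E → L),
    ∀ I : Set E, N.Indep I ↔ AlgebraicIndependent K (fun i : I => φ i)

/-- The matroid `N` on `E` is linear over the field `K`: there is a `K`-vector space `V`
and a map `ψ : E → V` such that `I ⊆ E` is independent in `N` if and only if the family
`(ψ(i))_{i∈I}` is `K`-linearly independent. -/
def LinearOver (K : Type*) [Field K] (N : Matroid E) : Prop :=
  ∃ (V : Type*) (_ : AddCommGroup V) (_ : Module K V) (ψ : E → V),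
    ∀ I : Set E, N.Indep I ↔ LinearIndependent K (fun i : I => ψ i)

/-- A matroid valuation `ν : binom(E,d) → ℝ ∪ {∞}` whose support matroid is `N`, i.e.
`ν(B) < ∞` exactly when `B` is a basis of `N`, together with the exchange property (V2). -/
def ValuationOf [DecidableEq E] (d : ℕ) (N : Matroid E) (ν : Finset E → WithTop ℝ) : Prop :=
  (∀ B : Finset E, B.card ≠ d → ν B = ⊤) ∧
  (∀ B : Finset E, B.card = d → (ν B ≠ ⊤ ↔ N.IsBase ↑B)) ∧
  (∀ B B' : Finset E, B.card = d → B'.card = d → ∀ i ∈ B \ B', ∃ j ∈ B' \ B,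
      ν (insert j (B.erase i)) + ν (insert i (B'.erase j)) ≤ ν B + ν B')

/-- A real-valued matroid valuation is trivial if there is an `α ∈ ℝ^E` with
`ν(B) = Σ_{i∈B} α_i` for all `B` with `ν(B) < ∞`. -/
def TrivialValR (ν : Finset E → WithTop ℝ) : Prop :=
  ∃ α : E → ℝ, ∀ B : Finset E, ν B ≠ ⊤ → ν B = ((∑ i ∈ B, α i : ℝ) : WithTop ℝ)

/-- The matroid `N` is rigid: every matroid valuation with support matroid `N` is trivial. -/
def Rigid [DecidableEq E] (N : Matroid E) : Prop :=
  ∀ (d : ℕ) (ν : Finset E → WithTop ℝ), ValuationOf d N ν → TrivialValR ν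


lemma swap_base [Fintype E] (N : Matroid E) (hNg : N.E = Set.univ) {i j : E} (hij : i ≠ j)
    (hdep : ¬ N.Indep {i, j}) (hi : N.Indep {i}) {B : Set E}
    (hB : N.IsBase B) (hjB : j ∈ B) : i ∉ B ∧ N.IsBase (insert i (B \ {j})) := by
  have hiE : i ∈ N.E := by rw [hNg]; trivial
  have hjE : j ∈ N.E := by rw [hNg]; trivial
  have hiB : i ∉ B := by
    intro hiB
    exact hdep (hB.indep.subset (Set.insert_subset hiB (Set.singleton_subset_iff.mpr hjB)))
  have hjcl : j ∈ N.closure {i} := by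
    by_contra hcl
    exact hdep (by
      have := hi.insert_indep_iff (e := j)
      rw [Set.pair_comm]
      exact this.mpr (Or.inl ⟨hjE, hcl⟩))
  refine ⟨hiB, ?_⟩
  have hI : N.Indep (B \ {j}) := hB.indep.subset diff_subset
  have hind : N.Indep (insert i (B \ {j})) := by
    by_contra hnind
    have hicl : i ∈ N.closure (B \ {j}) := by
      have := hI.insert_indep_iff (e := i)
      by_contra h
      exact hnind (this.mpr (Or.inl ⟨hiE, h⟩))
    have hjcl' : j ∈ N.closure (B \ {j}) := by
      have h1 : N.closure {i} ⊆ N.closure (insert i (B \ {j})) :=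
        N.closure_subset_closure (by simp)
      have h2 : N.closure (insert i (B \ {j})) = N.closure (B \ {j}) :=
        Matroid.closure_insert_eq_of_mem_closure hicl
      exact h2 ▸ h1 hjcl
    have : N.Indep (insert j (B \ {j})) := by
      rw [Set.insert_diff_singleton, Set.insert_eq_of_mem hjB]; exact hB.indep
    rw [hI.insert_indep_iff] at this
    rcases this with h | h
    · exact h.2 hjcl'
    · exact h.2 rfl
  obtain ⟨B', hB', hsub⟩ := hind.exists_isBase_superset
  have hfin : B'.Finite := Set.toFinite _
  have hcard : B'.encard ≤ (insert i (B \ {j})).encard := by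
    rw [hB'.encard_eq_encard_of_isBase hB,
      Set.encard_insert_of_notMem (by simp [hiB]),
      Set.encard_diff_singleton_add_one hjB]
  have := hfin.eq_of_subset_of_encard_le' hsub hcard
  exact this ▸ hB'

/-- key exchange inequality -/
lemma key_ineq [Fintype E] [DecidableEq E] (d : ℕ) (N : Matroid E) (hNg : N.E = Set.univ)
    {i j : E} (hij : i ≠ j) (hdep : ¬ N.Indep {i, j}) (hi : N.Indep {i})
    {ν : Finset E → WithTop ℝ} (hν : ValuationOf d N ν)
    {B1 B2 : Finset E} (h1c : B1.card = d) (h2c : B2.card = d)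
    (h1 : N.IsBase ↑B1) (h2 : N.IsBase ↑B2) (hj1 : j ∈ B1) (hj2 : j ∈ B2) :
    ν (insert i (B1.erase j)) + ν B2 ≤ ν B1 + ν (insert i (B2.erase j)) := by
  obtain ⟨hi2, hb2s⟩ := swap_base N hNg hij hdep hi h2 hj2
  have hd1 : 1 ≤ d := h2c ▸ Finset.card_pos.mpr ⟨j, hj2⟩
  set B2' : Finset E := insert i (B2.erase j) with hB2'
  have hi2e : i ∉ B2.erase j := fun h => hi2 (Finset.mem_of_mem_erase h)
  have h2'c : B2'.card = d := by
    rw [hB2', Finset.card_insert_of_notMem hi2e, Finset.card_erase_of_mem hj2, h2c]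
    omega
  have hjB2' : j ∉ B2' := by
    rw [hB2', Finset.mem_insert]
    rintro (h | h)
    · exact hij h.symm
    · exact (Finset.notMem_erase j B2) h
  have hjmem : j ∈ B1 \ B2' := Finset.mem_sdiff.mpr ⟨hj1, hjB2'⟩
  obtain ⟨k, hk, hineq⟩ := hν.2.2 B1 B2' h1c h2'c j hjmem
  rcases Finset.mem_sdiff.mp hk with ⟨hkB2', hkB1⟩
  by_cases hki : k = i
  · subst hki
    rwa [hB2', Finset.erase_insert hi2e, Finset.insert_erase hj2] at hineq
  · exfalso
    set C : Finset E := insert j (B2'.erase k) with hC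
    have hjC : j ∉ B2'.erase k := fun h => hjB2' (Finset.mem_of_mem_erase h)
    have hCc : C.card = d := by
      rw [hC, Finset.card_insert_of_notMem hjC, Finset.card_erase_of_mem hkB2', h2'c]
      omega
    have hCtop : ν C = ⊤ := by
      by_contra h
      have hbase := (hν.2.1 C hCc).mp h
      refine hdep (hbase.indep.subset ?_)
      have hiC : i ∈ C := by
        rw [hC, Finset.mem_insert]
        exact Or.inr (Finset.mem_erase.mpr ⟨fun h => hki h.symm, Finset.mem_insert_self _ _⟩)
      have hjCm : j ∈ C := Finset.mem_insert_self _ _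
      refine Set.insert_subset ?_ (Set.singleton_subset_iff.mpr ?_)
      · exact_mod_cast Finset.mem_coe.mpr hiC
      · exact_mod_cast Finset.mem_coe.mpr hjCm
    -- LHS is ⊤, RHS is finite
    have hRHS : ν B1 + ν B2' ≠ ⊤ := by
      have h1f : ν B1 ≠ ⊤ := (hν.2.1 B1 h1c).mpr h1
      have h2f : ν B2' ≠ ⊤ := by
        refine (hν.2.1 B2' h2'c).mpr ?_
        have : (B2' : Set E) = insert i ((B2 : Set E) \ {j}) := by
          simp [hB2']
        rw [this]; exact hb2s
      exact WithTop.add_ne_top.mpr ⟨h1f, h2f⟩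
    rw [hCtop] at hineq
    simp only [add_top, top_le_iff] at hineq
    exact hRHS hineq
theorem circuit_pair_valuations_equivalent [Fintype E] [DecidableEq E]
    (d : ℕ) (N : Matroid E) (hNg : N.E = Set.univ) (i j : E) (hij : i ≠ j)
    (hdep : ¬ N.Indep {i, j}) (hi : N.Indep {i}) (hj : N.Indep {j})
    (ν ν' : Finset E → WithTop ℝ)
    (hν : ValuationOf d N ν) (hν' : ValuationOf d N ν')
    (hagree : ∀ B : Finset E, j ∉ B → ν B = ν' B) :
    ∃ α : E → ℝ, ∀ B : Finset E, ν' B ≠ ⊤ →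
      ν B = ν' B + ((∑ k ∈ B, α k : ℝ) : WithTop ℝ) := by
  by_cases hex : ∃ B0 : Finset E, ν' B0 ≠ ⊤ ∧ j ∈ B0
  · obtain ⟨B0, h0, hj0⟩ := hex
    have h0c : B0.card = d := by
      by_contra h; exact h0 (hν'.1 B0 h)
    have h0b : N.IsBase ↑B0 := (hν'.2.1 B0 h0c).mp h0
    have h0ν : ν B0 ≠ ⊤ := (hν.2.1 B0 h0c).mpr h0b
    obtain ⟨a, ha⟩ := WithTop.ne_top_iff_exists.mp h0ν
    obtain ⟨a', ha'⟩ := WithTop.ne_top_iff_exists.mp h0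
    refine ⟨fun k => if k = j then a - a' else 0, ?_⟩
    intro B hB
    have hBc : B.card = d := by
      by_contra h; exact hB (hν'.1 B h)
    have hBb : N.IsBase ↑B := (hν'.2.1 B hBc).mp hB
    have hBν : ν B ≠ ⊤ := (hν.2.1 B hBc).mpr hBb
    by_cases hjB : j ∈ B
    · -- main case
      have hsum : (∑ k ∈ B, if k = j then a - a' else 0) = a - a' := by
        rw [Finset.sum_ite_eq' B j (fun _ => a - a')]
        simp [hjB]
      -- swapped sets
      set Bs : Finset E := insert i (B.erase j) with hBs
      set B0s : Finset E := insert i (B0.erase j) with hB0s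
      have hjBs : j ∉ Bs := by
        rw [hBs, Finset.mem_insert]
        rintro (h | h)
        · exact hij h.symm
        · exact (Finset.notMem_erase j B) h
      have hjB0s : j ∉ B0s := by
        rw [hB0s, Finset.mem_insert]
        rintro (h | h)
        · exact hij h.symm
        · exact (Finset.notMem_erase j B0) h
      -- swapped sets are bases
      obtain ⟨hiB, hBsb'⟩ := swap_base N hNg hij hdep hi hBb hjB
      obtain ⟨hiB0, hB0sb'⟩ := swap_base N hNg hij hdep hi h0b hj0
      have hiBe : i ∉ B.erase j := fun h => hiB (Finset.mem_coe.mpr (Finset.mem_of_mem_erase h))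
      have hiB0e : i ∉ B0.erase j := fun h => hiB0 (Finset.mem_coe.mpr (Finset.mem_of_mem_erase h))
      have hd1 : 1 ≤ d := hBc ▸ Finset.card_pos.mpr ⟨j, hjB⟩
      have hBsc : Bs.card = d := by
        rw [hBs, Finset.card_insert_of_notMem hiBe, Finset.card_erase_of_mem hjB, hBc]; omega
      have hB0sc : B0s.card = d := by
        rw [hB0s, Finset.card_insert_of_notMem hiB0e, Finset.card_erase_of_mem hj0, h0c]; omega
      have hBsb : N.IsBase ↑Bs := by
        have : (Bs : Set E) = insert i ((B : Set E) \ {j}) := by simp [hBs]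
        rw [this]; exact hBsb'
      have hB0sb : N.IsBase ↑B0s := by
        have : (B0s : Set E) = insert i ((B0 : Set E) \ {j}) := by simp [hB0s]
        rw [this]; exact hB0sb'
      have hBsν : ν Bs ≠ ⊤ := (hν.2.1 Bs hBsc).mpr hBsb
      have hB0sν : ν B0s ≠ ⊤ := (hν.2.1 B0s hB0sc).mpr hB0sb
      obtain ⟨b, hb⟩ := WithTop.ne_top_iff_exists.mp hBν
      obtain ⟨b', hb'⟩ := WithTop.ne_top_iff_exists.mp hB
      obtain ⟨p, hp⟩ := WithTop.ne_top_iff_exists.mp hBsν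
      obtain ⟨q, hq⟩ := WithTop.ne_top_iff_exists.mp hB0sν
      -- agreement on swapped sets
      have hagBs : ν' Bs = (p : WithTop ℝ) := by rw [← hagree Bs hjBs, hp]
      have hagB0s : ν' B0s = (q : WithTop ℝ) := by rw [← hagree B0s hjB0s, hq]
      -- four applications of key_ineq
      have k1 := key_ineq d N hNg hij hdep hi hν hBc h0c hBb h0b hjB hj0
      have k2 := key_ineq d N hNg hij hdep hi hν h0c hBc h0b hBb hj0 hjB
      have k3 := key_ineq d N hNg hij hdep hi hν' hBc h0c hBb h0b hjB hj0
      have k4 := key_ineq d N hNg hij hdep hi hν' h0c hBc h0b hBb hj0 hjB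
      rw [← hBs, ← hB0s, hp.symm, ha.symm, hb.symm, hq.symm] at k1
      rw [← hBs, ← hB0s, hp.symm, ha.symm, hb.symm, hq.symm] at k2
      rw [← hBs, ← hB0s, hagBs, hagB0s, ha'.symm, hb'.symm] at k3
      rw [← hBs, ← hB0s, hagBs, hagB0s, ha'.symm, hb'.symm] at k4
      have r1 : p + a ≤ b + q := by exact_mod_cast k1
      have r2 : q + b ≤ a + p := by exact_mod_cast k2
      have r3 : p + a' ≤ b' + q := by exact_mod_cast k3
      have r4 : q + b' ≤ a' + p := by exact_mod_cast k4
      rw [hb.symm, hb'.symm, hsum]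
      have : b = b' + (a - a') := by linarith
      rw [this]
      push_cast
      ring_nf
    · have hsum : (∑ k ∈ B, if k = j then a - a' else 0) = 0 :=
        Finset.sum_eq_zero (fun x hx => by
          rw [if_neg]; rintro rfl; exact hjB hx)
      rw [hsum, hagree B hjB]
      obtain ⟨b', hb'⟩ := WithTop.ne_top_iff_exists.mp hB
      rw [hb'.symm]
      norm_num
  · refine ⟨0, fun B hB => ?_⟩
    have hjB : j ∉ B := fun h => hex ⟨B, hB, h⟩
    rw [hagree B hjB]
    obtain ⟨b', hb'⟩ := WithTop.ne_top_iff_exists.mp hB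
    rw [hb'.symm]
    simp

end FrobFlock
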